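/- If a family τ_ℓ(z) satisfies τ_0 = 1 and the determinant formula τ_ℓ(z) = det(tridiagonal matrix with diagonal τ_1(zq^{i−1}) and off-diagonal 1's), then it satisfies the Hirota-type bilinear relation τ_ℓ(zq^{1/2}) τ_ℓ(zq^{-1/2}) = τ_{ℓ+1}(zq^{-1/2}) τ_{ℓ−1}(zq^{1/2}) + 1 for ℓ ≥ 1 (in the convention where shifts are as in the recursion τ_1(z)τ_ℓ(zq) = τ_{ℓ+1}(z) + τ_{ℓ−1}(zq²)). -/

import Mathlib

/-- The `ℓ×ℓ` tridiagonal matrix with diagonal entries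
`τ₁(z), τ₁(zq), …, τ₁(zq^{ℓ−1})` and off-diagonal entries `1`. -/
noncomputable def triDiag (τ1 : ℂ → ℂ) (q z : ℂ) (ℓ : ℕ) :
    Matrix (Fin ℓ) (Fin ℓ) ℂ :=
  fun i j =>
    if i = j then τ1 (z * q ^ (i : ℕ))
    else if (i : ℕ) + 1 = (j : ℕ) ∨ (j : ℕ) + 1 = (i : ℕ) then 1
    else 0

lemma triDiag_sub1 (t : ℂ → ℂ) (q z : ℂ) (ℓ : ℕ) :
    (triDiag t q z (ℓ+1)).submatrix Fin.succ Fin.succ = triDiag t q (z*q) ℓ := by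
  ext i j
  have hv : z * q ^ ((i:ℕ) + 1) = z * q * q ^ (i:ℕ) := by ring
  have hc : ((i:ℕ)+1) + 1 = (j:ℕ)+1 ∨ ((j:ℕ)+1)+1 = (i:ℕ)+1 ↔
      (i:ℕ)+1 = (j:ℕ) ∨ (j:ℕ)+1 = (i:ℕ) := by omega
  simp only [Matrix.submatrix_apply, triDiag, Fin.val_succ, Fin.succ_inj, hv, hc]

lemma triDiag_sub2 (t : ℂ → ℂ) (q z : ℂ) (ℓ : ℕ) :
    (triDiag t q z (ℓ+2)).submatrix (Fin.succ ∘ Fin.succ) (Fin.succ ∘ Fin.succ)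
      = triDiag t q (z*q*q) ℓ := by
  calc (triDiag t q z (ℓ+2)).submatrix (Fin.succ ∘ Fin.succ) (Fin.succ ∘ Fin.succ)
      = ((triDiag t q z (ℓ+2)).submatrix Fin.succ Fin.succ).submatrix Fin.succ Fin.succ := by
        rw [Matrix.submatrix_submatrix]
    _ = triDiag t q (z*q*q) ℓ := by rw [triDiag_sub1, triDiag_sub1]

lemma triDiag_minor (t : ℂ → ℂ) (q z : ℂ) (ℓ : ℕ) :
    ((triDiag t q z (ℓ+2)).submatrix Fin.succ ((1:Fin (ℓ+2)).succAbove)).det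
      = (triDiag t q (z*q*q) ℓ).det := by
  have h1 : (1 : Fin (ℓ+2)) = (0 : Fin (ℓ+1)).succ := rfl
  rw [Matrix.det_succ_column_zero, Fin.sum_univ_succ]
  have hA0 : ∀ i : Fin (ℓ+1),
      (triDiag t q z (ℓ+2)).submatrix Fin.succ ((1:Fin (ℓ+2)).succAbove) i 0
        = if i = 0 then 1 else 0 := by
    intro i
    simp only [Matrix.submatrix_apply, h1, Fin.succ_succAbove_zero]
    rcases i with ⟨iv, hi⟩
    simp [triDiag, Fin.ext_iff]
  rw [Finset.sum_eq_zero (fun i _ => by rw [hA0]; simp [Fin.succ_ne_zero]), add_zero, hA0]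
  have hcols : (1:Fin (ℓ+2)).succAbove ∘ Fin.succ = Fin.succ ∘ Fin.succ := by
    funext j
    show ((0:Fin (ℓ+1)).succ).succAbove j.succ = j.succ.succ
    rw [Fin.succ_succAbove_succ, Fin.succAbove_zero]
  have hm : ((triDiag t q z (ℓ+2)).submatrix Fin.succ ((1:Fin (ℓ+2)).succAbove)).submatrix
      (Fin.succAbove 0) Fin.succ
      = triDiag t q (z*q*q) ℓ := by
    rw [Fin.succAbove_zero, Matrix.submatrix_submatrix, hcols, ← triDiag_sub2 t q z ℓ]
  rw [hm]
  simp

lemma triDiag_rec (t : ℂ → ℂ) (q z : ℂ) (ℓ : ℕ) :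
    (triDiag t q z (ℓ+2)).det =
      t z * (triDiag t q (z*q) (ℓ+1)).det - (triDiag t q (z*q*q) ℓ).det := by
  rw [Matrix.det_succ_row_zero, Fin.sum_univ_succ, Fin.sum_univ_succ]
  have h00 : triDiag t q z (ℓ+2) 0 0 = t z := by simp [triDiag]
  have h01 : triDiag t q z (ℓ+2) 0 ((0 : Fin (ℓ+1)).succ) = 1 := by
    simp [triDiag, Fin.ext_iff]
  have hrest : ∀ j : Fin ℓ, triDiag t q z (ℓ+2) 0 j.succ.succ = 0 := by
    intro j; simp [triDiag, Fin.ext_iff]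
  rw [Finset.sum_eq_zero (fun j _ => by rw [hrest j]; ring), add_zero, h00, h01,
    Fin.succAbove_zero, triDiag_sub1]
  have h1 : ((0 : Fin (ℓ+1)).succ) = (1 : Fin (ℓ+2)) := rfl
  rw [h1, triDiag_minor]
  simp
  ring

/-- If `τ₀ = 1` and `τ_ℓ(z)` is given by the tridiagonal determinant formula,
then the Hirota-type bilinear relation
`τ_ℓ(zq^{1/2}) τ_ℓ(zq^{−1/2}) = τ_{ℓ+1}(zq^{−1/2}) τ_{ℓ−1}(zq^{1/2}) + 1`
holds for `ℓ ≥ 1` (`sq` is a fixed square root of `q`). -/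
theorem fusion_hirota (τ : ℕ → ℂ → ℂ) (q sq : ℂ)
    (hsq : sq ^ 2 = q) (hsq0 : sq ≠ 0)
    (h0 : ∀ z, τ 0 z = 1)
    (hdet : ∀ (ℓ : ℕ) (z : ℂ), τ ℓ z = (triDiag (τ 1) q z ℓ).det) :
    ∀ (ℓ : ℕ) (z : ℂ),
      τ (ℓ + 1) (z * sq) * τ (ℓ + 1) (z * sq⁻¹) =
        τ (ℓ + 2) (z * sq⁻¹) * τ ℓ (z * sq) + 1 := by
  have hD : ∀ (ℓ : ℕ) (z : ℂ),
      τ (ℓ+2) z = τ 1 z * τ (ℓ+1) (z*q) - τ ℓ (z*q*q) := by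
    intro ℓ z
    rw [hdet (ℓ+2), hdet (ℓ+1), hdet ℓ, triDiag_rec]
  have key : ∀ (ℓ : ℕ) (w : ℂ),
      τ (ℓ+1) (w*q) * τ (ℓ+1) w = τ (ℓ+2) w * τ ℓ (w*q) + 1 := by
    intro ℓ
    induction ℓ with
    | zero =>
      intro w
      have h2 := hD 0 w
      rw [h0] at h2
      rw [h2, h0]
      ring
    | succ n ih =>
      intro w
      rw [hD (n+1) w, hD n w]
      linear_combination ih (w*q)
  intro ℓ z
  have hz : z * sq⁻¹ * q = z * sq := by
    rw [← hsq]
    field_simp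
  have := key ℓ (z * sq⁻¹)
  rw [hz] at this
  exact this
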